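/- For all n, the number of permutations of [n] avoiding both generalized patterns 1-32 and 21-3 equals the number of strongly monotone partitions of [n]. -/

import Mathlib

open List
set_option linter.unusedSectionVars false

variable {α : Type*} [LinearOrder α]

def headW : List α → WithBot α
  | [] => ⊥
  | a :: _ => (a : WithBot α)

def lastW : List α → WithBot α
  | [] => ⊥
  | [a] => (a : WithBot α)
  | _ :: b :: l => lastW (b :: l)

@[simp] lemma headW_nil : headW ([] : List α) = ⊥ := rfl
@[simp] lemma headW_cons (a : α) (l : List α) : headW (a :: l) = (a : WithBot α) := rfl
@[simp] lemma lastW_nil : lastW ([] : List α) = ⊥ := rfl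
@[simp] lemma lastW_singleton (a : α) : lastW [a] = (a : WithBot α) := rfl
@[simp] lemma lastW_cons_cons (a b : α) (l : List α) :
    lastW (a :: b :: l) = lastW (b :: l) := rfl

lemma lastW_append_singleton (u : List α) (a : α) : lastW (u ++ [a]) = (a : WithBot α) := by
  induction u with
  | nil => rfl
  | cons x u ih =>
    cases u with
    | nil => rfl
    | cons y u => simpa using ih

lemma headW_append_of_ne_nil (u v : List α) (h : u ≠ []) : headW (u ++ v) = headW u := by
  cases u with
  | nil => exact absurd rfl h
  | cons a u => rfl

lemma headW_le_of_mem {r : List α} (h : IsChain (· < ·) r) {x : α} (hx : x ∈ r) :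
    headW r ≤ (x : WithBot α) := by
  cases r with
  | nil => simp at hx
  | cons a t =>
    rw [List.isChain_iff_pairwise, pairwise_cons] at h
    rcases List.mem_cons.1 hx with rfl | hx
    · simp
    · simp only [headW_cons]
      exact le_of_lt (by exact_mod_cast h.1 x hx)

lemma le_lastW_of_mem {r : List α} (h : IsChain (· < ·) r) {x : α} (hx : x ∈ r) :
    (x : WithBot α) ≤ lastW r := by
  induction r generalizing x with
  | nil => simp at hx
  | cons a t ih =>
    cases t with
    | nil => simp at hx; simp [hx]
    | cons b t =>
      rcases List.mem_cons.1 hx with rfl | hx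
      · have hab : x < b := (List.isChain_cons_cons.1 h).1
        have : (b : WithBot α) ≤ lastW (b :: t) :=
          ih (List.isChain_cons_cons.1 h).2 (List.mem_cons_self)
        rw [lastW_cons_cons]
        calc (x : WithBot α) ≤ (b : WithBot α) := by exact_mod_cast le_of_lt hab
          _ ≤ _ := this
      · rw [lastW_cons_cons]
        exact ih (List.isChain_cons_cons.1 h).2 hx

lemma headW_le_lastW {r : List α} (h : IsChain (· < ·) r) (hne : r ≠ []) :
    headW r ≤ lastW r := by
  cases r with
  | nil => exact absurd rfl hne
  | cons a t => simpa using le_lastW_of_mem h (List.mem_cons_self)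

lemma chain'_rel_of_eq_append {R : α → α → Prop} {l u v : List α} {x y : α}
    (h : IsChain R l) (he : l = u ++ x :: y :: v) : R x y := by
  subst he
  induction u with
  | nil => exact (List.isChain_cons_cons.1 h).1
  | cons a u ih => exact ih h.tail

def runsAux (a : α) : List α → List α × List (List α)
  | [] => ([a], [])
  | b :: l =>
    let p := runsAux b l
    if a < b then (a :: p.1, p.2) else ([a], p.1 :: p.2)

def runs : List α → List (List α)
  | [] => []
  | a :: l => (runsAux a l).1 :: (runsAux a l).2

@[simp] lemma runs_nil : runs ([] : List α) = [] := rfl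

lemma runs_cons (a : α) (l : List α) : runs (a :: l) = (runsAux a l).1 :: (runsAux a l).2 := rfl

lemma runsAux_fst_head : ∀ (l : List α) (a : α), ∃ t, (runsAux a l).1 = a :: t := by
  intro l a
  cases l with
  | nil => exact ⟨[], rfl⟩
  | cons b l =>
    simp only [runsAux]
    split
    · exact ⟨_, rfl⟩
    · exact ⟨[], rfl⟩

lemma runsAux_flatten : ∀ (l : List α) (a : α),
    (runsAux a l).1 ++ (runsAux a l).2.flatten = a :: l := by
  intro l
  induction l with
  | nil => intro a; rfl
  | cons b l ih =>
    intro a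
    simp only [runsAux]
    split
    · simpa using ih b
    · simpa using ih b

lemma runs_flatten (l : List α) : (runs l).flatten = l := by
  cases l with
  | nil => rfl
  | cons a l => simpa [runs_cons] using runsAux_flatten l a

lemma runsAux_chain : ∀ (l : List α) (a : α),
    IsChain (· < ·) (runsAux a l).1 ∧ ∀ r ∈ (runsAux a l).2, r ≠ [] ∧ IsChain (· < ·) r := by
  intro l
  induction l with
  | nil => intro a; exact ⟨isChain_singleton a, by simp [runsAux]⟩
  | cons b l ih =>
    intro a
    obtain ⟨t, ht⟩ := runsAux_fst_head l b
    simp only [runsAux]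
    split
    · refine ⟨?_, (ih b).2⟩
      have h1 := (ih b).1
      rw [ht] at h1 ⊢
      exact List.isChain_cons_cons.2 ⟨by assumption, h1⟩
    · refine ⟨isChain_singleton a, ?_⟩
      intro r hr
      rcases List.mem_cons.1 hr with rfl | hr
      · refine ⟨by rw [ht]; simp, (ih b).1⟩
      · exact (ih b).2 r hr

lemma runs_ne_nil_mem {l : List α} {r : List α} (hr : r ∈ runs l) :
    r ≠ [] ∧ IsChain (· < ·) r := by
  cases l with
  | nil => simp at hr
  | cons a l =>
    rw [runs_cons] at hr
    rcases List.mem_cons.1 hr with rfl | hr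
    · obtain ⟨t, ht⟩ := runsAux_fst_head l a
      exact ⟨by rw [ht]; simp, (runsAux_chain l a).1⟩
    · exact (runsAux_chain l a).2 r hr

def GoodRuns (rs : List (List α)) : Prop :=
  (∀ r ∈ rs, r ≠ [] ∧ IsChain (· < ·) r) ∧
  ((rs.map headW).Pairwise (· > ·)) ∧
  ((rs.map lastW).Pairwise (· > ·))

lemma GoodRuns.tail {r : List α} {rs : List (List α)} (h : GoodRuns (r :: rs)) : GoodRuns rs := by
  obtain ⟨h1, h2, h3⟩ := h
  exact ⟨fun s hs => h1 s (mem_cons_of_mem _ hs),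
    (pairwise_cons.1 h2).2, (pairwise_cons.1 h3).2⟩

lemma headW_eq_coe_head {r : List α} (h : r ≠ []) : headW r = (r.head h : WithBot α) := by
  cases r with
  | nil => exact absurd rfl h
  | cons a t => rfl

lemma lastW_eq_coe_getLast {r : List α} (h : r ≠ []) : lastW r = (r.getLast h : WithBot α) := by
  conv_lhs => rw [← List.dropLast_append_getLast h]
  exact lastW_append_singleton _ _

-- boundary: head of next run ≤ last of previous run (always true for `runs`)
lemma runs_boundary (l : List α) :
    IsChain (fun r s => headW s ≤ lastW r) (runs l) := by
  cases l with
  | nil => simp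
  | cons a l =>
    rw [runs_cons]
    induction l generalizing a with
    | nil => simp [runsAux]
    | cons b l ih =>
      have ihb := ih b
      simp only [runsAux]
      split
      · rw [List.isChain_cons] at ihb ⊢
        refine ⟨?_, ihb.2⟩
        intro s hs
        have h1 := ihb.1 s hs
        obtain ⟨t, ht⟩ := runsAux_fst_head l b
        rw [ht] at h1 ⊢
        simpa using h1
      · rename_i hab
        rw [List.isChain_cons_cons]
        constructor
        · obtain ⟨t, ht⟩ := runsAux_fst_head l b
          rw [ht, headW_cons, lastW_singleton, WithBot.coe_le_coe]
          exact le_of_not_gt hab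
        · exact ihb

lemma runsAux_peel (r : List α) : ∀ (t : List α) (a : α), IsChain (· < ·) (a :: r) →
    (∀ y ∈ t.head?, (y : WithBot α) < lastW (a :: r)) →
    runsAux a (r ++ t) = (a :: r, runs t) := by
  induction r with
  | nil =>
    intro t a _ hb
    cases t with
    | nil => rfl
    | cons b t' =>
      have hba : (b : WithBot α) < (a : WithBot α) := by simpa using hb b (by simp)
      have : ¬ a < b := by
        rw [WithBot.coe_lt_coe] at hba; exact not_lt.2 (le_of_lt hba)
      simp only [nil_append, runsAux, if_neg this]
      rfl
  | cons x r' ih =>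
    intro t a hc hb
    have hax : a < x := (List.isChain_cons_cons.1 hc).1
    have step : runsAux x (r' ++ t) = (x :: r', runs t) := by
      apply ih t x (List.isChain_cons_cons.1 hc).2
      intro y hy
      have := hb y hy
      rwa [lastW_cons_cons] at this
    simp only [cons_append, runsAux, if_pos hax]
    rw [step]

lemma runs_flatten_eq {rs : List (List α)} (h : GoodRuns rs) : runs rs.flatten = rs := by
  induction rs with
  | nil => simp
  | cons r rs' ih =>
    have hr := h.1 r mem_cons_self
    obtain ⟨hne, hch⟩ := hr
    cases r with
    | nil => exact absurd rfl hne
    | cons a r' =>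
      have hb : ∀ y ∈ (rs'.flatten).head?, (y : WithBot α) < lastW (a :: r') := by
        intro y hy
        cases rs' with
        | nil => simp at hy
        | cons s rs'' =>
          have hsne : s ≠ [] := (h.1 s (by simp)).1
          have hsch : IsChain (· < ·) s := (h.1 s (by simp)).2
          have hhead : headW (s ++ rs''.flatten) = headW s :=
            headW_append_of_ne_nil s _ hsne
          have hy' : (y : WithBot α) = headW s := by
            simp only [flatten_cons] at hy
            cases s with
            | nil => exact absurd rfl hsne
            | cons c s' => simp only [cons_append, head?_cons] at hy; simp [← Option.some_inj.1 hy]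
          have h1 : headW s ≤ lastW s := headW_le_lastW hsch hsne
          have h2 : lastW s < lastW (a :: r') := by
            have := h.2.2
            simp only [map_cons, pairwise_cons] at this
            exact this.1 (lastW s) (by simp)
          calc (y : WithBot α) = headW s := hy'
            _ ≤ lastW s := h1
            _ < _ := h2
      have hpeel := runsAux_peel r' rs'.flatten a hch hb
      rw [show ((a :: r') :: rs').flatten = a :: (r' ++ rs'.flatten) by simp,
        runs_cons, hpeel, ih h.tail]

def NoA (l : List α) : Prop :=
  ∀ (u : List α) (a : α) (v : List α) (b c : α) (w : List α),
    l = u ++ a :: v ++ b :: c :: w → ¬(a < c ∧ c < b)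

def NoB (l : List α) : Prop :=
  ∀ (u : List α) (a b : α) (v : List α) (c : α) (w : List α),
    l = u ++ a :: b :: v ++ c :: w → ¬(b < a ∧ a < c)

lemma runs_extract {l : List α} (hN : l.Nodup) (h1 : NoA l) (h2 : NoB l)
    (k : ℕ) (hk : k + 1 < (runs l).length) :
    (∀ y ∈ (((runs l).take (k+1)).flatten), headW ((runs l)[k+1]) < (y : WithBot α)) ∧
    (∀ x ∈ (((runs l).drop (k+1)).flatten), (x : WithBot α) < lastW ((runs l)[k])) := by
  have hk' : k < (runs l).length := by omega
  have hne_k : (runs l)[k] ≠ [] := (runs_ne_nil_mem (getElem_mem hk')).1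
  have hne_k1 : (runs l)[k+1] ≠ [] := (runs_ne_nil_mem (getElem_mem hk)).1
  set b := (runs l)[k].getLast hne_k with hb_def
  set c := (runs l)[k+1].head hne_k1 with hc_def
  set u0 := ((runs l).take k).flatten ++ (runs l)[k].dropLast with hu0
  set w0 := (runs l)[k+1].tail ++ ((runs l).drop (k+2)).flatten with hw0
  have e3 : ((runs l).take (k+1)).flatten = u0 ++ [b] := by
    rw [take_succ, getElem?_eq_getElem hk']
    simp only [Option.toList_some, flatten_append, flatten_cons, flatten_nil, append_nil, hu0]
    rw [append_assoc, dropLast_append_getLast hne_k]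
  have e5 : ((runs l).drop (k+1)).flatten = c :: w0 := by
    rw [drop_eq_getElem_cons hk, flatten_cons, hw0, hc_def, ← cons_append,
      cons_head_tail]
  have e6 : l = u0 ++ b :: c :: w0 := by
    conv_lhs => rw [← runs_flatten l, ← take_append_drop (k+1) (runs l)]
    rw [flatten_append, e3, e5]
    simp
  have hcb_le : (c : WithBot α) ≤ (b : WithBot α) := by
    have hch := runs_boundary l
    rw [List.isChain_iff_getElem] at hch
    have := hch k (by omega)
    rwa [headW_eq_coe_head hne_k1, lastW_eq_coe_getLast hne_k] at this
  have hN' : (u0 ++ b :: c :: w0).Nodup := e6 ▸ hN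
  obtain ⟨hnu, hnr, hdisj⟩ := nodup_append.1 hN'
  have hbc_ne : b ≠ c := (pairwise_cons.1 hnr).1 c (by simp)
  have hcb : c < b := lt_of_le_of_ne (WithBot.coe_le_coe.1 hcb_le) (Ne.symm hbc_ne)
  have claim1 : ∀ x ∈ u0, c < x := by
    intro x hx
    obtain ⟨u1, u2, he⟩ := append_of_mem hx
    have hsplit : l = u1 ++ x :: u2 ++ b :: c :: w0 := by
      rw [e6, he]
    have hna := h1 u1 x u2 b c w0 hsplit
    have hxc : ¬ x < c := fun hlt => hna ⟨hlt, hcb⟩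
    have hne : x ≠ c := by
      intro hxx
      exact hdisj x hx c (by simp) hxx
    exact lt_of_le_of_ne (le_of_not_gt hxc) (Ne.symm hne)
  have claim2 : ∀ x ∈ w0, x < b := by
    intro x hx
    obtain ⟨v, w', he⟩ := append_of_mem hx
    have hsplit : l = u0 ++ b :: c :: v ++ x :: w' := by
      rw [e6, he]; simp
    have hnb := h2 u0 b c v x w' hsplit
    have hbx : ¬ b < x := fun hlt => hnb ⟨hcb, hlt⟩
    have hne : b ≠ x := (pairwise_cons.1 hnr).1 x (by simp [hx])
    exact lt_of_le_of_ne (le_of_not_gt hbx) (Ne.symm hne)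
  constructor
  · intro y hy
    rw [e3] at hy
    rw [headW_eq_coe_head hne_k1, ← hc_def, WithBot.coe_lt_coe]
    rcases mem_append.1 hy with hy | hy
    · exact claim1 y hy
    · rw [mem_singleton.1 hy]; exact hcb
  · intro x hx
    rw [e5] at hx
    rw [lastW_eq_coe_getLast hne_k, ← hb_def, WithBot.coe_lt_coe]
    rcases mem_cons.1 hx with rfl | hx
    · exact hcb
    · exact claim2 x hx

lemma goodRuns_runs {l : List α} (hN : l.Nodup) (h1 : NoA l) (h2 : NoB l) :
    GoodRuns (runs l) := by
  refine ⟨fun r hr => runs_ne_nil_mem hr, ?_, ?_⟩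
  · rw [pairwise_map, pairwise_iff_getElem]
    intro i j hi hj hij
    obtain ⟨k, rfl⟩ : ∃ k, j = k + 1 := ⟨j - 1, by omega⟩
    have hext := (runs_extract hN h1 h2 k hj).1
    have hne_i : (runs l)[i] ≠ [] := (runs_ne_nil_mem (getElem_mem hi)).1
    have hmem : (runs l)[i].head hne_i ∈ (((runs l).take (k+1)).flatten) := by
      rw [mem_flatten]
      refine ⟨(runs l)[i], ?_, head_mem hne_i⟩
      have hlen : i < ((runs l).take (k+1)).length := by
        rw [length_take]; omega
      have : ((runs l).take (k+1))[i] = (runs l)[i] := List.getElem_take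
      exact this ▸ getElem_mem hlen
    have := hext _ hmem
    rwa [headW_eq_coe_head hne_i]
  · rw [pairwise_map, pairwise_iff_getElem]
    intro i j hi hj hij
    have hkk : i + 1 < (runs l).length := by omega
    have hext := (runs_extract hN h1 h2 i hkk).2
    have hne_j : (runs l)[j] ≠ [] := (runs_ne_nil_mem (getElem_mem hj)).1
    have hmem : (runs l)[j].getLast hne_j ∈ (((runs l).drop (i+1)).flatten) := by
      rw [mem_flatten]
      refine ⟨(runs l)[j], ?_, getLast_mem hne_j⟩
      have hlen : j - (i+1) < ((runs l).drop (i+1)).length := by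
        rw [length_drop]; omega
      have : ((runs l).drop (i+1))[j - (i+1)] = (runs l)[j] := by
        rw [List.getElem_drop]
        congr 1
        omega
      exact this ▸ getElem_mem hlen
    have := hext _ hmem
    rwa [lastW_eq_coe_getLast hne_j]

lemma GoodRuns.lastW_lt {r : List α} {rs : List (List α)} (h : GoodRuns (r :: rs))
    {q : List α} (hq : q ∈ rs) : lastW q < lastW r := by
  have := h.2.2
  rw [map_cons, pairwise_cons] at this
  exact this.1 (lastW q) (mem_map_of_mem hq)

lemma GoodRuns.headW_lt {r : List α} {rs : List (List α)} (h : GoodRuns (r :: rs))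
    {q : List α} (hq : q ∈ rs) : headW q < headW r := by
  have := h.2.1
  rw [map_cons, pairwise_cons] at this
  exact this.1 (headW q) (mem_map_of_mem hq)

lemma GoodRuns.le_lastW_flatten {rs : List (List α)} (h : GoodRuns rs)
    {x : α} (hx : x ∈ rs.flatten) : ∃ q ∈ rs, (x : WithBot α) ≤ lastW q := by
  obtain ⟨q, hq, hxq⟩ := mem_flatten.1 hx
  exact ⟨q, hq, le_lastW_of_mem (h.1 q hq).2 hxq⟩

lemma goodRuns_d2 {rs : List (List α)} (h : GoodRuns rs) :
    ∀ (u : List α) (a b : α) (v : List α), rs.flatten = u ++ a :: b :: v → b < a →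
    ∀ x ∈ v, x < a := by
  induction rs with
  | nil =>
    intro u a b v he
    rw [flatten_nil] at he
    exact absurd he.symm (by simp)
  | cons r rs' ih =>
    intro u a b v he hba x hx
    rw [flatten_cons] at he
    rcases append_eq_append_iff.1 he with ⟨a', ha1, ha2⟩ | ⟨c', hc1, hc2⟩
    · exact ih h.tail a' a b v ha2 hba x hx
    · match c', hc2 with
      | [], hc2 =>
        -- r = u, rs'.flatten = a :: b :: v
        simp only [nil_append] at hc2
        -- first run of rs' is nonempty, starts with a
        cases rs' with
        | nil => rw [flatten_nil] at hc2; exact absurd hc2.symm (by simp)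
        | cons s rs'' =>
          have hsne : s ≠ [] := (h.tail.1 s (by simp)).1
          have hsch : IsChain (· < ·) s := (h.tail.1 s (by simp)).2
          rw [flatten_cons] at hc2
          cases s with
          | nil => exact absurd rfl hsne
          | cons a0 s' =>
            rw [cons_append] at hc2
            obtain ⟨ha0', htl'⟩ := List.cons_eq_cons.1 hc2
            have ha0 : a0 = a := ha0'.symm
            have htl : s' ++ rs''.flatten = b :: v := htl'.symm
            cases s' with
            | cons z s'' =>
              have hz : z = b := by injection htl
              have : a0 < z := (List.isChain_cons_cons.1 hsch).1
              rw [ha0, hz] at this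
              exact absurd this (not_lt.2 (le_of_lt hba))
            | nil =>
              rw [nil_append] at htl
              have hxin : x ∈ rs''.flatten := by
                rw [htl]; exact mem_cons_of_mem _ hx
              obtain ⟨q, hq, hle⟩ := h.tail.tail.le_lastW_flatten hxin
              have hlt : lastW q < lastW [a0] := h.tail.lastW_lt hq
              rw [lastW_singleton, ha0] at hlt
              have : (x : WithBot α) < (a : WithBot α) := lt_of_le_of_lt hle hlt
              exact_mod_cast this
      | [y], hc2 =>
        -- r = u ++ [y], y = a, rs'.flatten = b :: v
        rw [cons_append] at hc2
        obtain ⟨hy', htl'⟩ := List.cons_eq_cons.1 hc2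
        have hy : y = a := hy'.symm
        have htl : rs'.flatten = b :: v := htl'.symm
        have hxin : x ∈ rs'.flatten := by
          rw [htl]; exact mem_cons_of_mem _ hx
        obtain ⟨q, hq, hle⟩ := h.tail.le_lastW_flatten hxin
        have hlt : lastW q < lastW r := h.lastW_lt hq
        rw [hc1, hy, lastW_append_singleton] at hlt
        have : (x : WithBot α) < (a : WithBot α) := lt_of_le_of_lt hle hlt
        exact_mod_cast this
      | y :: z :: c'', hc2 =>
        have hy : y = a := by injection hc2.symm
        have hz : z = b := by
          have := hc2.symm; injection this with h1 h2; injection h2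
        have hch : IsChain (· < ·) r := (h.1 r (by simp)).2
        have : y < z := chain'_rel_of_eq_append hch hc1
        rw [hy, hz] at this
        exact absurd this (not_lt.2 (le_of_lt hba))

lemma goodRuns_d1 {rs : List (List α)} (h : GoodRuns rs) :
    ∀ (p : List α) (b c : α) (w : List α), rs.flatten = p ++ b :: c :: w → c < b →
      (∀ x ∈ p, c < x) ∧ (∀ r₀ ∈ rs.head?, (c : WithBot α) < headW r₀) := by
  induction rs with
  | nil =>
    intro p b c w he
    rw [flatten_nil] at he
    exact absurd he.symm (by simp)
  | cons r rs' ih =>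
    intro p b c w he hcb
    rw [flatten_cons] at he
    have hrne : r ≠ [] := (h.1 r (by simp)).1
    have hrch : IsChain (· < ·) r := (h.1 r (by simp)).2
    rcases append_eq_append_iff.1 he with ⟨a', ha1, ha2⟩ | ⟨c', hc1, hc2⟩
    · -- p = r ++ a', rs'.flatten = a' ++ b :: c :: w
      obtain ⟨IH1, IH2⟩ := ih h.tail a' b c w ha2 hcb
      have hkey : (c : WithBot α) < headW r := by
        cases rs' with
        | nil => rw [flatten_nil] at ha2; exact absurd ha2.symm (by simp)
        | cons s rs'' =>
          have h2 := IH2 s (by simp)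
          exact lt_trans h2 (h.headW_lt (by simp))
      refine ⟨?_, ?_⟩
      · intro x hxp
        rw [ha1] at hxp
        rcases mem_append.1 hxp with hxr | hxa
        · have : (c : WithBot α) < (x : WithBot α) :=
            lt_of_lt_of_le hkey (headW_le_of_mem hrch hxr)
          exact_mod_cast this
        · exact IH1 x hxa
      · intro r₀ hr₀
        simp only [head?_cons, Option.mem_def, Option.some_inj] at hr₀
        rw [← hr₀]
        exact hkey
    · -- r = p ++ c', b :: c :: w = c' ++ rs'.flatten
      have hflat_head : ∀ (t : List (List α)), GoodRuns t → ∀ (c0 : α) (w0 : List α),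
          t.flatten = c0 :: w0 → ∃ q ∈ t.head?, headW q = (c0 : WithBot α) := by
        intro t ht c0 w0 hft
        cases t with
        | nil => rw [flatten_nil] at hft; exact absurd hft (by simp)
        | cons q t' =>
          have hqne : q ≠ [] := (ht.1 q (by simp)).1
          cases q with
          | nil => exact absurd rfl hqne
          | cons q0 q' =>
            rw [flatten_cons, cons_append] at hft
            have : q0 = c0 := by injection hft
            exact ⟨q0 :: q', by simp, by rw [headW_cons, this]⟩
      match c', hc2 with
      | [], hc2 =>
        simp only [nil_append] at hc2 hc1
        -- r = p, rs'.flatten = b :: c :: w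
        cases rs' with
        | nil => rw [flatten_nil] at hc2; exact absurd hc2.symm (by simp)
        | cons s rs'' =>
          have hsne : s ≠ [] := (h.tail.1 s (by simp)).1
          have hsch : IsChain (· < ·) s := (h.tail.1 s (by simp)).2
          rw [flatten_cons] at hc2
          cases s with
          | nil => exact absurd rfl hsne
          | cons b0 s' =>
            rw [cons_append] at hc2
            obtain ⟨hb0', htl'⟩ := List.cons_eq_cons.1 hc2
            have hb0 : b0 = b := hb0'.symm
            have htl : s' ++ rs''.flatten = c :: w := htl'.symm
            cases s' with
            | cons z s'' =>
              have hz : z = c := by injection htl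
              have : b0 < z := (List.isChain_cons_cons.1 hsch).1
              rw [hb0, hz] at this
              exact absurd this (not_lt.2 (le_of_lt hcb))
            | nil =>
              rw [nil_append] at htl
              obtain ⟨q, hq, hqh⟩ := hflat_head rs'' h.tail.tail c w htl
              -- q ∈ rs''.head?, headW q = c
              have hqmem : q ∈ rs'' := by
                cases rs'' with
                | nil => simp at hq
                | cons q1 t1 =>
                  simp only [head?_cons, Option.mem_def, Option.some_inj] at hq
                  rw [hq]; simp
              have hkey : (c : WithBot α) < headW r := by
                rw [← hqh]
                exact lt_trans (h.tail.headW_lt hqmem) (h.headW_lt (by simp))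
              refine ⟨?_, ?_⟩
              · intro x hxp
                have hxr : x ∈ r := by rw [hc1]; exact mem_append_left _ hxp
                have : (c : WithBot α) < (x : WithBot α) :=
                  lt_of_lt_of_le hkey (headW_le_of_mem hrch hxr)
                exact_mod_cast this
              · intro r₀ hr₀
                simp only [head?_cons, Option.mem_def, Option.some_inj] at hr₀
                rw [← hr₀]; exact hkey
      | [y], hc2 =>
        rw [cons_append] at hc2
        obtain ⟨hy', htl'⟩ := List.cons_eq_cons.1 hc2
        have hy : y = b := hy'.symm
        have htl : rs'.flatten = c :: w := htl'.symm
        obtain ⟨q, hq, hqh⟩ := hflat_head rs' h.tail c w htl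
        have hqmem : q ∈ rs' := by
          cases rs' with
          | nil => simp at hq
          | cons q1 t1 =>
            simp only [head?_cons, Option.mem_def, Option.some_inj] at hq
            rw [hq]; simp
        have hkey : (c : WithBot α) < headW r := by
          rw [← hqh]
          exact h.headW_lt hqmem
        refine ⟨?_, ?_⟩
        · intro x hxp
          have hxr : x ∈ r := by rw [hc1]; exact mem_append_left _ hxp
          have : (c : WithBot α) < (x : WithBot α) :=
            lt_of_lt_of_le hkey (headW_le_of_mem hrch hxr)
          exact_mod_cast this
        · intro r₀ hr₀
          simp only [head?_cons, Option.mem_def, Option.some_inj] at hr₀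
          rw [← hr₀]; exact hkey
      | y :: z :: c'', hc2 =>
        have hy : y = b := by injection hc2.symm
        have hz : z = c := by
          have := hc2.symm; injection this with h1 h2; injection h2
        have : y < z := chain'_rel_of_eq_append hrch hc1
        rw [hy, hz] at this
        exact absurd this (not_lt.2 (le_of_lt hcb))

lemma noA_flatten {rs : List (List α)} (h : GoodRuns rs) : NoA rs.flatten := by
  intro u a v b c w he hcontra
  have := (goodRuns_d1 h (u ++ a :: v) b c w (by rw [he, append_assoc]) hcontra.2).1 a (by simp)
  exact absurd hcontra.1 (not_lt.2 (le_of_lt this))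

lemma noB_flatten {rs : List (List α)} (h : GoodRuns rs) : NoB rs.flatten := by
  intro u a b v c w he hcontra
  have := goodRuns_d2 h u a b (v ++ c :: w) (by rw [he]; simp) hcontra.1 c (by simp)
  exact absurd hcontra.2 (not_lt.2 (le_of_lt this))

lemma getElem_append_cons (u t : List α) (a : α) :
    (u ++ a :: t)[u.length]'(by simp) = a := by
  rw [List.getElem_append_right (le_refl u.length)]
  simp

lemma getElem_append_cons_succ (u t : List α) (a : α) (k : ℕ) (hk : k < t.length) :
    (u ++ a :: t)[u.length + 1 + k]'(by simp; omega) = t[k] := by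
  rw [List.getElem_append_right (by omega : u.length ≤ u.length + 1 + k)]
  have : u.length + 1 + k - u.length = k + 1 := by omega
  simp only [this]
  simp

lemma decompA (l : List α) (i j : ℕ) (hij : i < j) (hj : j + 1 < l.length) :
    l = l.take i ++ (l[i]'(by omega)) :: (l.drop (i+1)).take (j-i-1) ++
      (l[j]'(by omega)) :: l[j+1] :: l.drop (j+2) := by
  have h1 : l = l.take i ++ l.drop i := (take_append_drop i l).symm
  have h2 : l.drop i = (l[i]'(by omega)) :: l.drop (i+1) := drop_eq_getElem_cons (by omega)
  have h3 : l.drop (i+1) = (l.drop (i+1)).take (j-i-1) ++ (l.drop (i+1)).drop (j-i-1) :=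
    (take_append_drop _ _).symm
  have h4 : (l.drop (i+1)).drop (j-i-1) = l.drop j := by
    rw [List.drop_drop]
    congr 1
    omega
  have h5 : l.drop j = (l[j]'(by omega)) :: l.drop (j+1) := drop_eq_getElem_cons (by omega)
  have h6 : l.drop (j+1) = l[j+1] :: l.drop (j+2) := drop_eq_getElem_cons (by omega)
  conv_lhs => rw [h1, h2, h3, h4, h5, h6]
  simp

lemma decompB (l : List α) (i j : ℕ) (hij : i + 1 < j) (hj : j < l.length) :
    l = l.take i ++ (l[i]'(by omega)) :: (l[i+1]'(by omega)) :: (l.drop (i+2)).take (j-i-2) ++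
      l[j] :: l.drop (j+1) := by
  have h1 : l = l.take i ++ l.drop i := (take_append_drop i l).symm
  have h2 : l.drop i = (l[i]'(by omega)) :: l.drop (i+1) := drop_eq_getElem_cons (by omega)
  have h2' : l.drop (i+1) = (l[i+1]'(by omega)) :: l.drop (i+2) := drop_eq_getElem_cons (by omega)
  have h3 : l.drop (i+2) = (l.drop (i+2)).take (j-i-2) ++ (l.drop (i+2)).drop (j-i-2) :=
    (take_append_drop _ _).symm
  have h4 : (l.drop (i+2)).drop (j-i-2) = l.drop j := by
    rw [List.drop_drop]
    congr 1
    omega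
  have h5 : l.drop j = l[j] :: l.drop (j+1) := drop_eq_getElem_cons (by omega)
  conv_lhs => rw [h1, h2, h2', h3, h4, h5]
  simp

lemma getElem_idx_congr (l : List α) {i j : ℕ} (h : i = j) (hi : i < l.length) :
    l[i] = l[j]'(h ▸ hi) := by congr 1

lemma noA_iff_getElem (l : List α) :
    NoA l ↔ ∀ i j : ℕ, ∀ (_ : i < j) (hj : j + 1 < l.length),
      ¬ ((l[i]'(by omega)) < l[j+1] ∧ l[j+1] < l[j]'(by omega)) := by
  constructor
  · intro H i j hij hj hcon
    exact H (l.take i) (l[i]'(by omega)) ((l.drop (i+1)).take (j-i-1)) (l[j]'(by omega))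
      (l[j+1]) (l.drop (j+2)) (decompA l i j hij hj) hcon
  · intro H u a v b c w he hcon
    subst he
    set L := u ++ a :: v ++ b :: c :: w with hL
    have e1 : L = u ++ a :: (v ++ b :: c :: w) := by simp [hL]
    have e2 : L = (u ++ a :: v ++ [b]) ++ c :: w := by simp [hL]
    have e3 : L = (u ++ a :: v) ++ b :: c :: w := by simp [hL]
    have hlen : u.length + 1 + v.length + 1 < L.length := by simp [hL]; omega
    have hi : L[u.length]'(by omega) = a := by
      rw [List.getElem_of_eq e1 (by omega)]
      exact getElem_append_cons u _ a
    have hbb : L[u.length + 1 + v.length]'(by omega) = b := by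
      refine Eq.trans ?_ (getElem_append_cons (u ++ a :: v) (c :: w) b)
      exact getElem_idx_congr _ (by simp; omega) _
    have hcc : L[u.length + 1 + v.length + 1]'(by omega) = c := by
      rw [List.getElem_of_eq e2 (by omega)]
      refine Eq.trans ?_ (getElem_append_cons (u ++ a :: v ++ [b]) w c)
      exact getElem_idx_congr _ (by simp; omega) _
    have := H u.length (u.length + 1 + v.length) (by omega) hlen
    rw [hi, hbb, hcc] at this
    exact this hcon

lemma noB_iff_getElem (l : List α) :
    NoB l ↔ ∀ i j : ℕ, ∀ (_ : i + 1 < j) (hj : j < l.length),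
      ¬ ((l[i+1]'(by omega)) < l[i]'(by omega) ∧ (l[i]'(by omega)) < l[j]) := by
  constructor
  · intro H i j hij hj hcon
    exact H (l.take i) (l[i]'(by omega)) (l[i+1]'(by omega)) ((l.drop (i+2)).take (j-i-2))
      (l[j]) (l.drop (j+1)) (decompB l i j hij hj) hcon
  · intro H u a b v c w he hcon
    subst he
    set L := u ++ a :: b :: v ++ c :: w with hL
    have e1 : L = u ++ a :: (b :: v ++ c :: w) := by simp [hL]
    have e1' : L = (u ++ [a]) ++ b :: (v ++ c :: w) := by simp [hL]
    have e2 : L = (u ++ a :: b :: v) ++ c :: w := by simp [hL]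
    have hlen : u.length + 2 + v.length < L.length := by simp [hL]; omega
    have hi : L[u.length]'(by omega) = a := by
      rw [List.getElem_of_eq e1 (by omega)]
      exact getElem_append_cons u _ a
    have hbb : L[u.length + 1]'(by omega) = b := by
      rw [List.getElem_of_eq e1' (by omega)]
      refine Eq.trans ?_ (getElem_append_cons (u ++ [a]) (v ++ c :: w) b)
      exact getElem_idx_congr _ (by simp) _
    have hcc : L[u.length + 2 + v.length]'(by omega) = c := by
      refine Eq.trans ?_ (getElem_append_cons (u ++ a :: b :: v) w c)
      exact getElem_idx_congr _ (by simp; omega) _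
    have := H u.length (u.length + 2 + v.length) (by omega) hlen
    rw [hi, hbb, hcc] at this
    exact this hcon

lemma toFinset_min' [DecidableEq α] {r : List α} (hch : IsChain (· < ·) r) (hne : r ≠ []) :
    r.toFinset.min = ((r.head hne : α) : WithTop α) := by
  apply _root_.le_antisymm
  · exact Finset.min_le (mem_toFinset.2 (head_mem hne))
  · apply Finset.le_min
    intro a ha
    rw [WithTop.coe_le_coe]
    have := headW_le_of_mem hch (mem_toFinset.1 ha)
    rw [headW_eq_coe_head hne, WithBot.coe_le_coe] at this
    exact this

lemma toFinset_max' [DecidableEq α] {r : List α} (hch : IsChain (· < ·) r) (hne : r ≠ []) :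
    r.toFinset.max = ((r.getLast hne : α) : WithBot α) := by
  apply _root_.le_antisymm
  · apply Finset.max_le
    intro a ha
    rw [WithBot.coe_le_coe]
    have := le_lastW_of_mem hch (mem_toFinset.1 ha)
    rw [lastW_eq_coe_getLast hne, WithBot.coe_le_coe] at this
    exact this
  · exact Finset.le_max (mem_toFinset.2 (getLast_mem hne))

lemma chain'_lt_nodup {r : List α} (hch : IsChain (· < ·) r) : r.Nodup := by
  rw [List.isChain_iff_pairwise] at hch
  exact hch.imp ne_of_lt

instance : IsAntisymm α (· < ·) :=
  ⟨fun _ _ h1 h2 => absurd (lt_trans h1 h2) (lt_irrefl _)⟩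

lemma eq_of_chain'_toFinset_eq [DecidableEq α] {r s : List α} (hr : IsChain (· < ·) r) (hs : IsChain (· < ·) s)
    (h : r.toFinset = s.toFinset) : r = s :=
  List.Perm.eq_of_pairwise'
    (List.isChain_iff_pairwise.1 hr) (List.isChain_iff_pairwise.1 hs)
    (List.perm_of_nodup_nodup_toFinset_eq (chain'_lt_nodup hr) (chain'_lt_nodup hs) h)

lemma sort_toFinset_self [DecidableEq α] {r : List α} (hch : IsChain (· < ·) r) :
    (fun A => Finset.sort A) r.toFinset = r := by
  apply eq_of_chain'_toFinset_eq _ hch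
  · rw [Finset.sort_toFinset]
  · exact (Finset.sortedLT_sort _).isChain

def contains132 {n : ℕ} (π : Equiv.Perm (Fin n)) : Prop :=
  ∃ i j : ℕ, ∃ (_ : i < j) (hj : j + 1 < n),
    π ⟨i, by omega⟩ < π ⟨j + 1, hj⟩ ∧ π ⟨j + 1, hj⟩ < π ⟨j, by omega⟩

def contains21_3 {n : ℕ} (π : Equiv.Perm (Fin n)) : Prop :=
  ∃ i j : ℕ, ∃ (_ : i + 1 < j) (hj : j < n),
    π ⟨i + 1, by omega⟩ < π ⟨i, by omega⟩ ∧ π ⟨i, by omega⟩ < π ⟨j, hj⟩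

def StronglyMonotonePartition {n : ℕ} (P : Finpartition (Finset.univ : Finset (Fin n))) : Prop :=
  ∀ A ∈ P.parts, ∀ B ∈ P.parts, A.min < B.min → A.max < B.max

section FinAssembly

variable {n : ℕ}

lemma noA_ofFn_iff (π : Equiv.Perm (Fin n)) : NoA (List.ofFn ⇑π) ↔ ¬ contains132 π := by
  rw [noA_iff_getElem]
  constructor
  · intro H hc
    obtain ⟨i, j, hij, hj, h1, h2⟩ := hc
    refine H i j hij (by simpa using hj) ⟨?_, ?_⟩
    · rw [List.getElem_ofFn, List.getElem_ofFn]; exact h1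
    · rw [List.getElem_ofFn, List.getElem_ofFn]; exact h2
  · intro H i j hij hj hcon
    refine H ⟨i, j, hij, by simpa using hj, ?_, ?_⟩
    · have := hcon.1
      rwa [List.getElem_ofFn, List.getElem_ofFn] at this
    · have := hcon.2
      rwa [List.getElem_ofFn, List.getElem_ofFn] at this

lemma noB_ofFn_iff (π : Equiv.Perm (Fin n)) : NoB (List.ofFn ⇑π) ↔ ¬ contains21_3 π := by
  rw [noB_iff_getElem]
  constructor
  · intro H hc
    obtain ⟨i, j, hij, hj, h1, h2⟩ := hc
    refine H i j hij (by simpa using hj) ⟨?_, ?_⟩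
    · rw [List.getElem_ofFn, List.getElem_ofFn]; exact h1
    · rw [List.getElem_ofFn, List.getElem_ofFn]; exact h2
  · intro H i j hij hj hcon
    refine H ⟨i, j, hij, by simpa using hj, ?_, ?_⟩
    · have := hcon.1
      rwa [List.getElem_ofFn, List.getElem_ofFn] at this
    · have := hcon.2
      rwa [List.getElem_ofFn, List.getElem_ofFn] at this

lemma runsSet_of_avoid (π : Equiv.Perm (Fin n)) (h1 : ¬ contains132 π) (h2 : ¬ contains21_3 π) :
    GoodRuns (runs (List.ofFn ⇑π)) ∧ (runs (List.ofFn ⇑π)).flatten.Nodup ∧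
      ∀ v : Fin n, v ∈ (runs (List.ofFn ⇑π)).flatten := by
  have hnd : (List.ofFn ⇑π).Nodup := List.nodup_ofFn.2 π.injective
  have hA : NoA (List.ofFn ⇑π) := (noA_ofFn_iff π).2 h1
  have hB : NoB (List.ofFn ⇑π) := (noB_ofFn_iff π).2 h2
  refine ⟨goodRuns_runs hnd hA hB, ?_, ?_⟩
  · rw [runs_flatten]; exact hnd
  · intro v; rw [runs_flatten]; exact List.mem_ofFn.2 ⟨π.symm v, π.apply_symm_apply v⟩

def AvoidPerm (n : ℕ) := {π : Equiv.Perm (Fin n) // ¬ contains132 π ∧ ¬ contains21_3 π}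

def GoodRunsSet (n : ℕ) :=
  {rs : List (List (Fin n)) // GoodRuns rs ∧ rs.flatten.Nodup ∧ ∀ v : Fin n, v ∈ rs.flatten}

def SMPart (n : ℕ) :=
  {P : Finpartition (Finset.univ : Finset (Fin n)) // StronglyMonotonePartition P}

lemma length_eq_of_nodup_univ {l : List (Fin n)} (hnd : l.Nodup) (hmem : ∀ v : Fin n, v ∈ l) :
    l.length = n := by
  have h1 : l.toFinset = Finset.univ :=
    Finset.eq_univ_iff_forall.2 (fun v => List.mem_toFinset.2 (hmem v))
  have h2 := List.toFinset_card_of_nodup hnd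
  rw [h1, Finset.card_univ, Fintype.card_fin] at h2
  exact h2.symm

noncomputable def permOfList (l : List (Fin n)) (hnd : l.Nodup) (hlen : l.length = n) : Equiv.Perm (Fin n) :=
  Equiv.ofBijective (fun i => l.get (Fin.cast hlen.symm i))
    (Finite.injective_iff_bijective.1
      ((List.nodup_iff_injective_get.1 hnd).comp (Fin.cast_injective _)))

lemma ofFn_permOfList (l : List (Fin n)) (hnd : l.Nodup) (hlen : l.length = n) :
    List.ofFn ⇑(permOfList l hnd hlen) = l := by
  apply List.ext_getElem (by simp [hlen])
  intro i h1 h2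
  rw [List.getElem_ofFn]
  rfl

def XtoZ (x : AvoidPerm n) : GoodRunsSet n :=
  ⟨runs (List.ofFn ⇑x.1), runsSet_of_avoid x.1 x.2.1 x.2.2⟩

noncomputable def ZtoX (z : GoodRunsSet n) : AvoidPerm n :=
  ⟨permOfList z.1.flatten z.2.2.1 (length_eq_of_nodup_univ z.2.2.1 z.2.2.2), by
    constructor
    · rw [← noA_ofFn_iff, ofFn_permOfList]
      exact noA_flatten z.2.1
    · rw [← noB_ofFn_iff, ofFn_permOfList]
      exact noB_flatten z.2.1⟩

noncomputable def equivXZ : AvoidPerm n ≃ GoodRunsSet n where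
  toFun := XtoZ
  invFun := ZtoX
  left_inv x := by
    apply Subtype.ext
    apply Equiv.coe_fn_injective
    apply List.ofFn_injective
    show List.ofFn ⇑(permOfList (XtoZ x).1.flatten (XtoZ x).2.2.1
      (length_eq_of_nodup_univ (XtoZ x).2.2.1 (XtoZ x).2.2.2)) = List.ofFn ⇑x.1
    rw [ofFn_permOfList]
    exact runs_flatten _
  right_inv z := by
    apply Subtype.ext
    show runs (List.ofFn ⇑(permOfList z.1.flatten z.2.2.1
      (length_eq_of_nodup_univ z.2.2.1 z.2.2.2))) = z.1
    rw [ofFn_permOfList]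
    exact runs_flatten_eq z.2.1

lemma parts_min_inj {P : Finpartition (Finset.univ : Finset (Fin n))} {A B : Finset (Fin n)}
    (hA : A ∈ P.parts) (hB : B ∈ P.parts) (h : A.min = B.min) : A = B := by
  by_contra hne
  have hAne : A.Nonempty := P.nonempty_of_mem_parts hA
  have hBne : B.Nonempty := P.nonempty_of_mem_parts hB
  have hd : Disjoint A B := P.disjoint hA hB hne
  have h1 : A.min' hAne ∈ A := Finset.min'_mem _ _
  have h2 : A.min' hAne ∈ B := by
    have e1 : (A.min' hAne : WithTop (Fin n)) = A.min := Finset.coe_min' hAne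
    have e2 : (B.min' hBne : WithTop (Fin n)) = B.min := Finset.coe_min' hBne
    have : A.min' hAne = B.min' hBne := by
      have := e1.trans (h.trans e2.symm)
      exact_mod_cast this
    rw [this]
    exact Finset.min'_mem _ _
  exact Finset.disjoint_left.1 hd h1 h2

noncomputable def sortedParts (P : Finpartition (Finset.univ : Finset (Fin n))) : List (Finset (Fin n)) :=
  P.parts.toList.mergeSort (fun A B => decide (B.min ≤ A.min))

lemma sortedParts_perm (P : Finpartition (Finset.univ : Finset (Fin n))) :
    (sortedParts P).Perm P.parts.toList :=
  List.mergeSort_perm _ _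

lemma mem_sortedParts {P : Finpartition (Finset.univ : Finset (Fin n))} {A : Finset (Fin n)} :
    A ∈ sortedParts P ↔ A ∈ P.parts := by
  rw [(sortedParts_perm P).mem_iff, Finset.mem_toList]

lemma sortedParts_pairwise_min (P : Finpartition (Finset.univ : Finset (Fin n))) :
    (sortedParts P).Pairwise (fun A B => B.min < A.min) := by
  have hs : (sortedParts P).Pairwise (fun A B : Finset (Fin n) => B.min ≤ A.min) := by
    have := List.pairwise_mergeSort (le := fun A B : Finset (Fin n) => decide (B.min ≤ A.min))
      (by intro a b c h1 h2; simp only [decide_eq_true_eq] at *; exact le_trans h2 h1)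
      (by intro a b; simp only [decide_eq_true_eq, Bool.or_eq_true]; exact (le_total _ _).symm)
      P.parts.toList
    exact this.imp (by intro a b h; simpa using h)
  have hnd : (sortedParts P).Nodup := (sortedParts_perm P).nodup_iff.2 (Finset.nodup_toList _)
  refine (hnd.and hs).imp_of_mem ?_
  intro A B hA hB hcomb
  exact lt_of_le_of_ne hcomb.2
    (fun h => hcomb.1 (parts_min_inj (mem_sortedParts.1 hB) (mem_sortedParts.1 hA) h).symm)

lemma sortedParts_sort_ne {P : Finpartition (Finset.univ : Finset (Fin n))} {A : Finset (Fin n)}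
    (hA : A ∈ sortedParts P) : Finset.sort A ≠ [] := by
  intro h
  have hAne : A.Nonempty := P.nonempty_of_mem_parts (mem_sortedParts.1 hA)
  have : A = ∅ := by
    rw [← Finset.sort_toFinset A (fun a b => a ≤ b), h]
    rfl
  rw [this] at hAne
  simp at hAne

lemma min_eq_headW_sort {A : Finset (Fin n)} (hne : Finset.sort A ≠ []) :
    A.min = (((Finset.sort A).head hne : Fin n) : WithTop (Fin n)) := by
  have := toFinset_min' (Finset.sortedLT_sort A).isChain hne
  rwa [Finset.sort_toFinset] at this

lemma max_eq_lastW_sort {A : Finset (Fin n)} (hne : Finset.sort A ≠ []) :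
    A.max = (((Finset.sort A).getLast hne : Fin n) : WithBot (Fin n)) := by
  have := toFinset_max' (Finset.sortedLT_sort A).isChain hne
  rwa [Finset.sort_toFinset] at this

lemma sortedParts_good (P : Finpartition (Finset.univ : Finset (Fin n)))
    (hSM : StronglyMonotonePartition P) :
    GoodRuns ((sortedParts P).map ((fun A => Finset.sort A))) ∧
      (((sortedParts P).map ((fun A => Finset.sort A))).flatten).Nodup ∧
      ∀ v : Fin n, v ∈ ((sortedParts P).map ((fun A => Finset.sort A))).flatten := by
  have hpw := sortedParts_pairwise_min P
  refine ⟨⟨?_, ?_, ?_⟩, ?_, ?_⟩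
  · intro r hr
    obtain ⟨A, hA, rfl⟩ := List.mem_map.1 hr
    exact ⟨sortedParts_sort_ne hA, (Finset.sortedLT_sort A).isChain⟩
  · rw [List.map_map, List.pairwise_map]
    refine hpw.imp_of_mem ?_
    intro A B hA hB hmin
    simp only [Function.comp_apply]
    rw [headW_eq_coe_head (sortedParts_sort_ne hA), headW_eq_coe_head (sortedParts_sort_ne hB)]
    rw [min_eq_headW_sort (sortedParts_sort_ne hA), min_eq_headW_sort (sortedParts_sort_ne hB),
      WithTop.coe_lt_coe] at hmin
    exact WithBot.coe_lt_coe.2 hmin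
  · rw [List.map_map, List.pairwise_map]
    refine hpw.imp_of_mem ?_
    intro A B hA hB hmin
    have hmax : B.max < A.max := hSM B (mem_sortedParts.1 hB) A (mem_sortedParts.1 hA) hmin
    simp only [Function.comp_apply]
    rw [lastW_eq_coe_getLast (sortedParts_sort_ne hA), lastW_eq_coe_getLast (sortedParts_sort_ne hB)]
    rw [max_eq_lastW_sort (sortedParts_sort_ne hA), max_eq_lastW_sort (sortedParts_sort_ne hB),
      WithBot.coe_lt_coe] at hmax
    exact WithBot.coe_lt_coe.2 hmax
  · rw [List.nodup_flatten]
    constructor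
    · intro r hr
      obtain ⟨A, hA, rfl⟩ := List.mem_map.1 hr
      exact Finset.sort_nodup _ _
    · rw [List.pairwise_map]
      refine hpw.imp_of_mem ?_
      intro A B hA hB hmin
      have hABne : A ≠ B := fun h => by rw [h] at hmin; exact lt_irrefl _ hmin
      have hd : Disjoint A B := P.disjoint (mem_sortedParts.1 hA) (mem_sortedParts.1 hB) hABne
      intro x hxA hxB
      exact Finset.disjoint_left.1 hd ((Finset.mem_sort _).1 hxA) ((Finset.mem_sort _).1 hxB)
  · intro v
    have hv : v ∈ P.parts.sup id := by rw [P.sup_parts]; exact Finset.mem_univ v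
    obtain ⟨A, hA, hvA⟩ := Finset.mem_sup.1 hv
    rw [List.mem_flatten]
    exact ⟨Finset.sort A, List.mem_map_of_mem (mem_sortedParts.2 hA),
      (Finset.mem_sort _).2 hvA⟩

noncomputable def YtoZ (y : SMPart n) : GoodRunsSet n :=
  ⟨(sortedParts y.1).map ((fun A => Finset.sort A)), sortedParts_good y.1 y.2⟩

instance : IsAntisymm (Finset (Fin n)) (fun A B => B.min < A.min) :=
  ⟨fun _ _ h1 h2 => absurd (lt_trans h1 h2) (lt_irrefl _)⟩

def ZtoY (z : GoodRunsSet n) : SMPart n :=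
  ⟨{ parts := (z.1.map List.toFinset).toFinset
     supIndep := by
       rw [Finset.supIndep_iff_pairwiseDisjoint]
       intro A hA B hB hne
       simp only [Finset.mem_coe, List.mem_toFinset, List.mem_map] at hA hB
       obtain ⟨r, hr, rfl⟩ := hA
       obtain ⟨s, hs, rfl⟩ := hB
       have hrs : r ≠ s := fun h => hne (by rw [h])
       have hpd : z.1.Pairwise List.Disjoint := (List.nodup_flatten.1 z.2.2.1).2
       have hdis : List.Disjoint r s :=
         haveI : Std.Symm (α := List (Fin n)) List.Disjoint := ⟨fun _ _ h => h.symm⟩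
         hpd.forall hr hs hrs
       simp only [Function.onFun, id]
       rw [Finset.disjoint_left]
       intro a ha1 ha2
       exact hdis (List.mem_toFinset.1 ha1) (List.mem_toFinset.1 ha2)
     sup_parts := by
       apply Finset.eq_univ_iff_forall.2
       intro v
       obtain ⟨r, hr, hv⟩ := List.mem_flatten.1 (z.2.2.2 v)
       exact Finset.mem_sup.2 ⟨r.toFinset, List.mem_toFinset.2 (List.mem_map_of_mem hr),
         List.mem_toFinset.2 hv⟩
     bot_notMem := by
       intro h
       simp only [Finset.bot_eq_empty, List.mem_toFinset, List.mem_map] at h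
       obtain ⟨r, hr, he⟩ := h
       exact absurd ((List.toFinset_eq_empty_iff r).1 he) (z.2.1.1 r hr).1 }, by
    intro A hA B hB hmin
    simp only [List.mem_toFinset, List.mem_map] at hA hB
    obtain ⟨r, hr, rfl⟩ := hA
    obtain ⟨s, hs, rfl⟩ := hB
    obtain ⟨hrne, hrch⟩ := z.2.1.1 r hr
    obtain ⟨hsne, hsch⟩ := z.2.1.1 s hs
    obtain ⟨i, hi, hri⟩ := List.mem_iff_getElem.1 hr
    obtain ⟨j, hj, hsj⟩ := List.mem_iff_getElem.1 hs
    have hpwh := List.pairwise_iff_getElem.1 (List.pairwise_map.1 z.2.1.2.1)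
    have hpwl := List.pairwise_iff_getElem.1 (List.pairwise_map.1 z.2.1.2.2)
    rw [toFinset_min' hrch hrne, toFinset_min' hsch hsne, WithTop.coe_lt_coe] at hmin
    rw [toFinset_max' hrch hrne, toFinset_max' hsch hsne]
    rcases lt_trichotomy i j with hij | hij | hij
    · exfalso
      have hgt := hpwh i j hi hj hij
      rw [hri, hsj] at hgt
      rw [gt_iff_lt, headW_eq_coe_head hsne, headW_eq_coe_head hrne, WithBot.coe_lt_coe] at hgt
      exact absurd hmin (not_lt.2 (le_of_lt hgt))
    · exfalso
      subst hij
      have heq : r = s := hri.symm.trans hsj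
      subst heq
      exact lt_irrefl _ hmin
    · have hgt := hpwl j i hj hi hij
      rw [hri, hsj] at hgt
      rw [gt_iff_lt, lastW_eq_coe_getLast hrne, lastW_eq_coe_getLast hsne,
        WithBot.coe_lt_coe] at hgt
      exact WithBot.coe_lt_coe.2 hgt⟩

lemma nodup_map_toFinset {z : GoodRunsSet n} : (z.1.map List.toFinset).Nodup := by
  apply List.pairwise_map.2
  refine (List.pairwise_map.1 z.2.1.2.1).imp_of_mem ?_
  intro r s hr hs hgt he
  obtain ⟨hrne, hrch⟩ := z.2.1.1 r hr
  obtain ⟨hsne, hsch⟩ := z.2.1.1 s hs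
  have h1 := toFinset_min' hrch hrne
  have h2 := toFinset_min' hsch hsne
  rw [he, h2] at h1
  have : s.head hsne = r.head hrne := by exact_mod_cast h1
  rw [gt_iff_lt, headW_eq_coe_head hsne, headW_eq_coe_head hrne, this] at hgt
  exact lt_irrefl _ hgt

lemma pairwise_min_map_toFinset {z : GoodRunsSet n} :
    (z.1.map List.toFinset).Pairwise (fun A B => B.min < A.min) := by
  apply List.pairwise_map.2
  refine (List.pairwise_map.1 z.2.1.2.1).imp_of_mem ?_
  intro r s hr hs hgt
  obtain ⟨hrne, hrch⟩ := z.2.1.1 r hr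
  obtain ⟨hsne, hsch⟩ := z.2.1.1 s hs
  rw [toFinset_min' hrch hrne, toFinset_min' hsch hsne, WithTop.coe_lt_coe]
  rw [gt_iff_lt, headW_eq_coe_head hsne, headW_eq_coe_head hrne, WithBot.coe_lt_coe] at hgt
  exact hgt

noncomputable def equivZY : GoodRunsSet n ≃ SMPart n where
  toFun := ZtoY
  invFun := YtoZ
  left_inv z := by
    apply Subtype.ext
    show (sortedParts (ZtoY z).1).map ((fun A => Finset.sort A)) = z.1
    have hstep1 : sortedParts (ZtoY z).1 = z.1.map List.toFinset := by
      have hperm1 : (sortedParts (ZtoY z).1).Perm (z.1.map List.toFinset) :=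
        (sortedParts_perm _).trans
          (List.perm_of_nodup_nodup_toFinset_eq (Finset.nodup_toList _) nodup_map_toFinset
            (by rw [Finset.toList_toFinset]; rfl))
      exact List.Perm.eq_of_pairwise' (sortedParts_pairwise_min _)
        pairwise_min_map_toFinset hperm1
    rw [hstep1, List.map_map]
    have : List.map ((fun A => Finset.sort A) ∘ List.toFinset) z.1 = List.map id z.1 := by
      apply List.map_congr_left
      intro r hr
      exact sort_toFinset_self (z.2.1.1 r hr).2
    rw [this, List.map_id]
  right_inv y := by
    apply Subtype.ext
    apply Finpartition.ext
    show ((YtoZ y).1.map List.toFinset).toFinset = y.1.parts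
    rw [show (YtoZ y).1 = (sortedParts y.1).map ((fun A => Finset.sort A)) from rfl, List.map_map]
    have h1 : List.map (List.toFinset ∘ (fun A => Finset.sort A)) (sortedParts y.1) =
        List.map id (sortedParts y.1) := by
      apply List.map_congr_left
      intro A hA
      exact Finset.sort_toFinset _ _
    rw [h1, List.map_id]
    ext A
    rw [List.mem_toFinset, (sortedParts_perm y.1).mem_iff, Finset.mem_toList]

end FinAssembly

theorem stmt16 (n : ℕ) :
    Nat.card {π : Equiv.Perm (Fin n) // ¬ contains132 π ∧ ¬ contains21_3 π} =
    Nat.card {P : Finpartition (Finset.univ : Finset (Fin n)) // StronglyMonotonePartition P} :=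
  Nat.card_congr ((equivXZ (n := n)).trans (equivZY (n := n)))
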